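/- Let e ∈ ℝ^d, e ≠ 0, and let b_0, b_2, b_4 ∈ ℝ^d be vectors such that e + b_k and e − b_k have all coordinates nonnegative and |b_k| = |e| for each k ∈ {0,2,4}. Then b_0 + b_2 + b_4 ≠ 0. -/
import Mathlib


theorem sum_of_three_sign_flips_ne_zero {d : ℕ} (e b₀ b₂ b₄ : Fin d → ℝ)
    (he : e ≠ 0)
    (hpos : ∀ b ∈ ({b₀, b₂, b₄} : Set (Fin d → ℝ)),
      (∀ i, 0 ≤ e i + b i) ∧ (∀ i, 0 ≤ e i - b i))
    (hnorm : ∀ b ∈ ({b₀, b₂, b₄} : Set (Fin d → ℝ)),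
      ∑ i, b i ^ 2 = ∑ i, e i ^ 2) :
    b₀ + b₂ + b₄ ≠ 0 := by
  have key : ∀ b ∈ ({b₀, b₂, b₄} : Set (Fin d → ℝ)), ∀ i, b i = e i ∨ b i = -e i := by
    intro b hb i
    obtain ⟨h1, h2⟩ := hpos b hb
    have hle : ∀ j, b j ^ 2 ≤ e j ^ 2 := by
      intro j; nlinarith [h1 j, h2 j]
    have heq : b i ^ 2 = e i ^ 2 := by
      by_contra hne
      have hlt : b i ^ 2 < e i ^ 2 := lt_of_le_of_ne (hle i) hne
      have : ∑ j, b j ^ 2 < ∑ j, e j ^ 2 :=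
        Finset.sum_lt_sum (fun j _ => hle j) ⟨i, Finset.mem_univ i, hlt⟩
      exact absurd (hnorm b hb) this.ne
    rcases sq_eq_sq_iff_eq_or_eq_neg.mp heq with h | h
    · exact Or.inl h
    · exact Or.inr h
  intro h
  obtain ⟨i, hi⟩ := Function.ne_iff.mp he
  have hsum : b₀ i + b₂ i + b₄ i = 0 := congrFun h i
  simp only [Pi.zero_apply] at hi
  have k0 := key b₀ (by simp) i
  have k2 := key b₂ (by simp) i
  have k4 := key b₄ (by simp) i
  rcases hi.lt_or_gt with h' | h' <;>
    rcases k0 with h0 | h0 <;> rcases k2 with h2 | h2 <;> rcases k4 with h4 | h4 <;>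
    rw [h0, h2, h4] at hsum <;> linarith
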